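/- There exist 2-connected outerplanar graphs H on 2n vertices (for every n ≥ 3) with ψ_3(H) ≥ n; hence the bound ψ_3(G) ≤ |V(G)|/2 for outerplanar graphs is tight. -/

import Mathlib

open SimpleGraph

variable {V : Type*}

/-- `S` is a `k`-path vertex cover of `G`: every path on `k` vertices meets `S`. -/
def IsPathVC (G : SimpleGraph V) (k : ℕ) (S : Set V) : Prop :=
  ∀ ⦃u v : V⦄ (w : G.Walk u v), w.IsPath → w.length + 1 = k → ∃ x ∈ w.support, x ∈ S

/-- `psi G k` is the minimum cardinality of a `k`-path vertex cover of `G`. -/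
noncomputable def psi (G : SimpleGraph V) (k : ℕ) : ℕ :=
  sInf {n | ∃ S : Set V, IsPathVC G k S ∧ S.ncard = n}

/-- `H` is a minor of `G`, witnessed by disjoint connected branch sets. -/
def IsMinor {α β : Type*} (H : SimpleGraph α) (G : SimpleGraph β) : Prop :=
  ∃ f : α → Set β, (∀ a, (G.induce (f a)).Connected) ∧ Pairwise (Function.onFun Disjoint f) ∧
    ∀ ⦃a b : α⦄, H.Adj a b → ∃ u ∈ f a, ∃ v ∈ f b, G.Adj u v

/-- A graph is outerplanar iff it has no `K₄` minor and no `K_{2,3}` minor. -/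
def IsOuterplanar (G : SimpleGraph V) : Prop :=
  ¬ IsMinor (completeGraph (Fin 4)) G ∧ ¬ IsMinor (completeBipartiteGraph (Fin 2) (Fin 3)) G

/-- A graph is 2-connected if it has at least 3 vertices and remains connected
after deleting any single vertex. -/
def IsTwoConnected [Fintype V] (G : SimpleGraph V) : Prop :=
  3 ≤ Fintype.card V ∧ ∀ v : V, (G.induce {w | w ≠ v}).Connected

set_option linter.unusedSectionVars false
set_option linter.unusedTactic false
set_option linter.unreachableTactic false

open SimpleGraph

section Sun
open Sum

variable (n : ℕ)

def cyc : SimpleGraph (ZMod n) := SimpleGraph.fromRel (fun i j => j = i + 1)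

variable {n}

lemma cyc_adj {i j : ZMod n} : (cyc n).Adj i j ↔ i ≠ j ∧ (j = i + 1 ∨ i = j + 1) := by
  simp [cyc, SimpleGraph.fromRel_adj]

private instance facNeZero {n : ℕ} [h : Fact (3 ≤ n)] : NeZero n := ⟨by have := h.out; omega⟩

section Cycle
variable {n : ℕ} [hn3 : Fact (3 ≤ n)]

private lemma hn3' : 3 ≤ n := hn3.out

/-- position of `x` relative to puncture `p` -/
def phi (p x : ZMod n) : ℕ := (x - p).val

lemma phi_inj (p : ZMod n) : Function.Injective (phi p) := by
  intro a b h
  have := ZMod.val_injective n h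
  exact sub_left_injective this

lemma phi_eq_zero {p x : ZMod n} : phi p x = 0 ↔ x = p := by
  rw [phi, ZMod.val_eq_zero, sub_eq_zero]

lemma phi_lt (p x : ZMod n) : phi p x < n := ZMod.val_lt _

lemma val_neg_one' : (-1 : ZMod n).val = n - 1 := by
  have h3 := hn3.out
  have : ((n - 1 : ℕ) : ZMod n) = -1 := by
    push_cast [Nat.cast_sub (by omega : 1 ≤ n)]
    simp [ZMod.natCast_self]
  rw [← this, ZMod.val_cast_of_lt (by omega)]

lemma phi_step {p x : ZMod n} (h : x + 1 ≠ p) : phi p (x + 1) = phi p x + 1 := by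
  have h3 := hn3.out
  haveI : Fact (1 < n) := ⟨by omega⟩
  have hne : x - p ≠ -1 := by
    intro hc
    apply h
    have : x = p - 1 := by linear_combination hc
    rw [this]; ring
  have hv : (x - p).val ≠ n - 1 := by
    intro hc
    apply hne
    apply ZMod.val_injective
    rw [hc, val_neg_one']
  have hlt : (x - p).val + (1 : ZMod n).val < n := by
    have := ZMod.val_lt (x - p) (n := n)
    rw [ZMod.val_one]
    omega
  have : x + 1 - p = (x - p) + 1 := by ring
  rw [phi, this, ZMod.val_add_of_lt hlt, ZMod.val_one]
  rfl

lemma cyc_step {p x y : ZMod n} (h : (cyc n).Adj x y) (hx : x ≠ p) (hy : y ≠ p) :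
    phi p y = phi p x + 1 ∨ phi p x = phi p y + 1 := by
  rcases cyc_adj.mp h with ⟨-, h1 | h1⟩
  · left; rw [h1]; exact phi_step (h1 ▸ hy)
  · right; rw [h1]; exact phi_step (h1 ▸ hx)

lemma ivt {S : Set (ZMod n)} {p : ZMod n} (hp : p ∉ S) {x y : S}
    (w : ((cyc n).induce S).Walk x y) :
    ∀ c : ℕ, phi p x.1 ≤ c → c ≤ phi p y.1 → ∃ z ∈ S, phi p z = c := by
  induction w with
  | @nil u =>
    intro c h1 h2
    exact ⟨u.1, u.2, by omega⟩
  | @cons u v y h q ih =>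
    intro c h1 h2
    rcases eq_or_lt_of_le h1 with he | hlt
    · exact ⟨u.1, u.2, he⟩
    · have hadj : (cyc n).Adj u.1 v.1 := h
      have hu : u.1 ≠ p := fun hc => hp (hc ▸ u.2)
      have hv : v.1 ≠ p := fun hc => hp (hc ▸ v.2)
      rcases cyc_step hadj hu hv with hs | hs
      · exact ih c (by omega) h2
      · exact ih c (by omega) h2

end Cycle
end Sun

section Cycle2
variable {n : ℕ} [hn3 : Fact (3 ≤ n)]

lemma interval {S : Set (ZMod n)} (hS : ((cyc n).induce S).Connected) {p : ZMod n} (hp : p ∉ S) :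
    ∃ a b : ℕ, 1 ≤ a ∧ b ≤ n - 1 ∧ ∀ x, x ∈ S ↔ (a ≤ phi p x ∧ phi p x ≤ b) := by
  classical
  obtain ⟨x0⟩ := hS.nonempty
  have hfin : S.Finite := Set.toFinite S
  set F : Finset ℕ := hfin.toFinset.image (phi p) with hF
  have hFne : F.Nonempty := ⟨phi p x0.1, Finset.mem_image.mpr ⟨x0.1, hfin.mem_toFinset.mpr x0.2, rfl⟩⟩
  set a := F.min' hFne
  set b := F.max' hFne
  obtain ⟨xa, hxa, hpa⟩ := Finset.mem_image.mp (F.min'_mem hFne)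
  obtain ⟨xb, hxb, hpb⟩ := Finset.mem_image.mp (F.max'_mem hFne)
  rw [hfin.mem_toFinset] at hxa hxb
  have hmem : ∀ x ∈ S, a ≤ phi p x ∧ phi p x ≤ b := by
    intro x hx
    have hxF : phi p x ∈ F := Finset.mem_image.mpr ⟨x, hfin.mem_toFinset.mpr hx, rfl⟩
    exact ⟨F.min'_le _ hxF, F.le_max' _ hxF⟩
  refine ⟨a, b, ?_, ?_, ?_⟩
  · rcases Nat.eq_zero_or_pos a with h0 | h; · exact absurd (hpa.trans h0) (fun hc => hp ((phi_eq_zero).mp hc ▸ hxa))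
    · exact h
  · have := phi_lt p xb; omega
  · intro x
    constructor
    · exact hmem x
    · rintro ⟨h1, h2⟩
      obtain ⟨w⟩ := hS.preconnected ⟨xa, hxa⟩ ⟨xb, hxb⟩
      obtain ⟨z, hz, hzc⟩ := ivt hp w (phi p x) (by rw [hpa]; exact h1) (by rw [hpb]; exact h2)
      rwa [← phi_inj p hzc]

/-- `i` is a boundary position of `S` -/
def Bd (S : Set (ZMod n)) (i : ZMod n) : Prop := (i ∈ S ∧ i + 1 ∉ S) ∨ (i ∉ S ∧ i + 1 ∈ S)

lemma bd_phi {S : Set (ZMod n)} {p : ZMod n} {a b : ℕ} (hp : p ∉ S) (ha : 1 ≤ a)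
    (hb : b ≤ n - 1) (hiff : ∀ x, x ∈ S ↔ (a ≤ phi p x ∧ phi p x ≤ b)) {i : ZMod n}
    (h : Bd S i) : phi p i = a - 1 ∨ phi p i = b := by
  have h3 := hn3.out
  rcases h with ⟨hi, hi1⟩ | ⟨hi, hi1⟩
  · obtain ⟨hai, hib⟩ := (hiff i).mp hi
    by_cases hip : i + 1 = p
    · right
      have : phi p i = n - 1 := by
        have : i - p = -1 := by rw [← hip]; ring
        rw [phi, this, val_neg_one']
      omega
    · have hstep := phi_step hip
      have : ¬ (a ≤ phi p (i+1) ∧ phi p (i+1) ≤ b) := fun hc => hi1 ((hiff _).mpr hc)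
      right; omega
  · obtain ⟨hai, hib⟩ := (hiff (i+1)).mp hi1
    by_cases hip : i = p
    · left
      have h1 : i + 1 ≠ p := by
        rw [hip]; intro hc
        have h10 : (1 : ZMod n) = 0 := by linear_combination hc
        haveI : Fact (1 < n) := ⟨by omega⟩
        have := congrArg ZMod.val h10
        rw [ZMod.val_one, ZMod.val_zero] at this
        omega
      have := phi_step h1
      have h0 : phi p i = 0 := phi_eq_zero.mpr hip
      omega
    · have h1 : i + 1 ≠ p := fun hc => hp (hc ▸ hi1)
      have hstep := phi_step h1
      have : ¬ (a ≤ phi p i ∧ phi p i ≤ b) := fun hc => hi ((hiff _).mpr hc)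
      left; omega

lemma no_three_bd {S : Set (ZMod n)} (hS : ((cyc n).induce S).Connected) {p : ZMod n}
    (hp : p ∉ S) {i1 i2 i3 : ZMod n} (h12 : i1 ≠ i2) (h13 : i1 ≠ i3) (h23 : i2 ≠ i3)
    (b1 : Bd S i1) (b2 : Bd S i2) (b3 : Bd S i3) : False := by
  obtain ⟨a, b, ha, hb, hiff⟩ := interval hS hp
  have p1 := bd_phi hp ha hb hiff b1
  have p2 := bd_phi hp ha hb hiff b2
  have p3 := bd_phi hp ha hb hiff b3
  have e12 : phi p i1 ≠ phi p i2 := fun hc => h12 (phi_inj p hc)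
  have e13 : phi p i1 ≠ phi p i3 := fun hc => h13 (phi_inj p hc)
  have e23 : phi p i2 ≠ phi p i3 := fun hc => h23 (phi_inj p hc)
  omega

end Cycle2

section SunSide
open Sum
variable (n : ℕ)

def sun : SimpleGraph (ZMod n ⊕ ZMod n) :=
  SimpleGraph.fromRel (fun x y =>
    match x, y with
    | inl i, inl j => j = i + 1
    | inl i, inr j => i = j ∨ i = j + 1
    | inr _, _ => False)

/-- the obvious homomorphism from an induced subgraph -/
def inducedHom {V : Type*} (G : SimpleGraph V) (S : Set V) : G.induce S →g G :=
  ⟨Subtype.val, fun {_ _} h => h⟩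

variable {n}

lemma sun_adj_ll {i j : ZMod n} :
    (sun n).Adj (inl i) (inl j) ↔ inl (α := ZMod n) (β := ZMod n) i ≠ inl j ∧ (j = i + 1 ∨ i = j + 1) := by
  simp [sun, SimpleGraph.fromRel_adj]

lemma sun_adj_lr {i j : ZMod n} :
    (sun n).Adj (inl i) (inr j) ↔ (i = j ∨ i = j + 1) := by
  simp [sun, SimpleGraph.fromRel_adj]

lemma sun_adj_rl {i j : ZMod n} :
    (sun n).Adj (inr i) (inl j) ↔ (j = i ∨ j = i + 1) := by
  constructor
  · intro h; have := h.symm; rw [sun_adj_lr] at this; tauto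
  · intro h; apply SimpleGraph.Adj.symm; rw [sun_adj_lr]; tauto

lemma sun_adj_rr {i j : ZMod n} : ¬ (sun n).Adj (inr i) (inr j) := by
  simp [sun, SimpleGraph.fromRel_adj]

/-- the shadow of a set on the cycle -/
def sh (A : Set (ZMod n ⊕ ZMod n)) : Set (ZMod n) := {i | inl i ∈ A}

variable [hn3 : Fact (3 ≤ n)]

lemma first_inl {A : Set (ZMod n ⊕ ZMod n)} (hA : ((sun n).induce A).Connected)
    {m : ZMod n} (hm : inr m ∈ A) {y : ZMod n ⊕ ZMod n} (hy : y ∈ A) (hne : y ≠ inr m) :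
    inl m ∈ A ∨ inl (m + 1) ∈ A := by
  obtain ⟨w⟩ := hA.preconnected ⟨inr m, hm⟩ ⟨y, hy⟩
  cases w with
  | nil => exact absurd rfl hne
  | cons h q =>
    rename_i z
    have hadj : (sun n).Adj (inr m) z.1 := h
    have hzA : z.1 ∈ A := z.2
    cases hz : z.1 with
    | inl j =>
      rw [hz] at hadj hzA
      rcases sun_adj_rl.mp hadj with h' | h'
      · left; rwa [← h']
      · right; rwa [← h']
    | inr j => rw [hz] at hadj; exact absurd hadj sun_adj_rr

lemma shape {A : Set (ZMod n ⊕ ZMod n)} (hA : ((sun n).induce A).Connected) :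
    (∃ i, inl i ∈ A) ∨ (∃ m, A = {inr m}) := by
  obtain ⟨x0⟩ := hA.nonempty
  by_cases hi : ∃ i, inl i ∈ A
  · exact Or.inl hi
  · right
    obtain ⟨x, hx⟩ := x0
    match x with
    | inl i => exact absurd ⟨i, hx⟩ hi
    | inr m =>
      refine ⟨m, Set.eq_singleton_iff_unique_mem.mpr ⟨hx, fun y hy => ?_⟩⟩
      by_contra hne
      rcases first_inl hA hx hy hne with h | h
      · exact hi ⟨m, h⟩
      · exact hi ⟨m + 1, h⟩

lemma pigeon {m : ZMod n} {B1 B2 B3 : Set (ZMod n ⊕ ZMod n)}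
    (d12 : Disjoint B1 B2) (d13 : Disjoint B1 B3) (d23 : Disjoint B2 B3)
    (h1 : ∃ y ∈ B1, (sun n).Adj (inr m) y) (h2 : ∃ y ∈ B2, (sun n).Adj (inr m) y)
    (h3 : ∃ y ∈ B3, (sun n).Adj (inr m) y) : False := by
  obtain ⟨y1, hy1, a1⟩ := h1
  obtain ⟨y2, hy2, a2⟩ := h2
  obtain ⟨y3, hy3, a3⟩ := h3
  have c : ∀ y : ZMod n ⊕ ZMod n, (sun n).Adj (inr m) y → y = inl m ∨ y = inl (m + 1) := by
    intro y hy
    cases y with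
    | inl j =>
      rcases sun_adj_rl.mp hy with h | h
      · left; rw [h]
      · right; rw [h]
    | inr j => exact absurd hy sun_adj_rr
  rcases c y1 a1 with e1 | e1 <;> rcases c y2 a2 with e2 | e2 <;> rcases c y3 a3 with e3 | e3
  · exact Set.disjoint_left.mp d12 hy1 (by rw [e1, ← e2]; exact hy2)
  · exact Set.disjoint_left.mp d12 hy1 (by rw [e1, ← e2]; exact hy2)
  · exact Set.disjoint_left.mp d13 hy1 (by rw [e1, ← e3]; exact hy3)
  · exact Set.disjoint_left.mp d23 hy2 (by rw [e2, ← e3]; exact hy3)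
  · exact Set.disjoint_left.mp d23 hy2 (by rw [e2, ← e3]; exact hy3)
  · exact Set.disjoint_left.mp d13 hy1 (by rw [e1, ← e3]; exact hy3)
  · exact Set.disjoint_left.mp d12 hy1 (by rw [e1, ← e2]; exact hy2)
  · exact Set.disjoint_left.mp d12 hy1 (by rw [e1, ← e2]; exact hy2)
end SunSide

section Proj
open Sum
variable {n : ℕ} [hn3 : Fact (3 ≤ n)]

lemma cyc_induce_adj {S : Set (ZMod n)} {a b : S} (h : (cyc n).Adj a.1 b.1) :
    ((cyc n).induce S).Adj a b := h

lemma proj_walk {A : Set (ZMod n ⊕ ZMod n)} {k : ZMod n} :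
    ∀ {x y : ZMod n ⊕ ZMod n} (w : (sun n).Walk x y), y = inl k →
    (∀ z ∈ w.support, z ∈ A) →
    ∀ (i : ZMod n) (hi : i ∈ sh A) (hk : k ∈ sh A),
      (x = inl i ∨ ∃ m, x = inr m ∧ (i = m ∨ i = m + 1)) →
      ((cyc n).induce (sh A)).Reachable ⟨i, hi⟩ ⟨k, hk⟩ := by
  intro x y w
  induction w with
  | nil =>
    intro hy hs i hi hk hd
    rcases hd with hd | ⟨m, hd, -⟩
    · have hik : i = k := by rw [hd] at hy; injection hy
      have : (⟨i, hi⟩ : sh A) = ⟨k, hk⟩ := Subtype.ext hik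
      rw [this]
    · rw [hd] at hy; exact absurd hy (by simp)
  | @cons u v y h q ih =>
    intro hy hs i hi hk hd
    have hvA : v ∈ A := hs v (by
      rw [SimpleGraph.Walk.support_cons]
      exact List.mem_cons_of_mem _ q.start_mem_support)
    have hsq : ∀ z ∈ q.support, z ∈ A := fun z hz => hs z
      (by rw [SimpleGraph.Walk.support_cons]; exact List.mem_cons_of_mem _ hz)
    rcases hd with hd | ⟨m, hd, him⟩
    · subst hd
      cases v with
      | inl i2 =>
        obtain ⟨hne, hor⟩ := sun_adj_ll.mp h
        have hi2 : i2 ∈ sh A := hvA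
        have hadj : (cyc n).Adj i i2 := cyc_adj.mpr ⟨fun hc => hne (congrArg inl hc), hor⟩
        have step : ((cyc n).induce (sh A)).Adj ⟨i, hi⟩ ⟨i2, hi2⟩ :=
          cyc_induce_adj (a := ⟨i, hi⟩) (b := ⟨i2, hi2⟩) hadj
        exact step.reachable.trans (ih hy hsq i2 hi2 hk (Or.inl rfl))
      | inr m =>
        exact ih hy hsq i hi hk (Or.inr ⟨m, rfl, sun_adj_lr.mp h⟩)
    · subst hd
      cases v with
      | inl i2 =>
        have hi2or := sun_adj_rl.mp h
        have hi2 : i2 ∈ sh A := hvA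
        have tail := ih hy hsq i2 hi2 hk (Or.inl rfl)
        by_cases hii : i = i2
        · have : (⟨i, hi⟩ : sh A) = ⟨i2, hi2⟩ := Subtype.ext hii
          rw [this]; exact tail
        · have hor : i2 = i + 1 ∨ i = i2 + 1 := by
            rcases him with h1 | h1 <;> rcases hi2or with h2 | h2 <;>
              first
                | (exact absurd (h1.trans h2.symm) hii)
                | (left; rw [h1, h2]; done)
                | (right; rw [h1, h2]; done)
          have hadj : (cyc n).Adj i i2 := cyc_adj.mpr ⟨hii, hor⟩
          have step : ((cyc n).induce (sh A)).Adj ⟨i, hi⟩ ⟨i2, hi2⟩ :=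
            cyc_induce_adj (a := ⟨i, hi⟩) (b := ⟨i2, hi2⟩) hadj
          exact step.reachable.trans tail
      | inr m2 => exact absurd h sun_adj_rr

lemma sh_connected {A : Set (ZMod n ⊕ ZMod n)} (hA : ((sun n).induce A).Connected)
    (hex : ∃ i, inl i ∈ A) : ((cyc n).induce (sh A)).Connected := by
  obtain ⟨i0, hi0⟩ := hex
  rw [SimpleGraph.connected_iff]
  constructor
  · rintro ⟨i, hi⟩ ⟨k, hk⟩
    obtain ⟨w⟩ := hA.preconnected ⟨inl i, hi⟩ ⟨inl k, hk⟩
    have hw : ∀ z ∈ (w.map (inducedHom (sun n) A)).support, z ∈ A := by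
      intro z hz
      rw [SimpleGraph.Walk.support_map] at hz
      obtain ⟨t, _, ht2⟩ := List.mem_map.mp hz
      exact ht2 ▸ t.2
    exact proj_walk (w.map (inducedHom (sun n) A)) rfl hw i hi hk (Or.inl rfl)
  · exact ⟨⟨i0, hi0⟩⟩


lemma adj_pair_lr {A B : Set (ZMod n ⊕ ZMod n)} (hB : ((sun n).induce B).Connected)
    (hd : Disjoint A B) (hBi : ∃ j, inl j ∈ B) {i m : ZMod n}
    (hiA : inl i ∈ A) (hmB : inr m ∈ B) (hadj : i = m ∨ i = m + 1) :
    ∃ i', (i' ∈ sh A ∧ i' + 1 ∈ sh B) ∨ (i' ∈ sh B ∧ i' + 1 ∈ sh A) := by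
  obtain ⟨j, hj⟩ := hBi
  have hnb := first_inl hB hmB hj (by simp)
  rcases hadj with hi | hi
  · rcases hnb with hb | hb
    · exact absurd (hi ▸ hb) (Set.disjoint_left.mp hd hiA)
    · exact ⟨i, Or.inl ⟨hiA, by rw [hi]; exact hb⟩⟩
  · rcases hnb with hb | hb
    · exact ⟨m, Or.inr ⟨hb, hi ▸ hiA⟩⟩
    · exact absurd (hi ▸ hb) (Set.disjoint_left.mp hd hiA)

lemma adj_pair {A B : Set (ZMod n ⊕ ZMod n)} (hA : ((sun n).induce A).Connected)
    (hB : ((sun n).induce B).Connected) (hd : Disjoint A B)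
    (hAi : ∃ i, inl i ∈ A) (hBi : ∃ j, inl j ∈ B)
    (he : ∃ a ∈ A, ∃ b ∈ B, (sun n).Adj a b) :
    ∃ i, (i ∈ sh A ∧ i + 1 ∈ sh B) ∨ (i ∈ sh B ∧ i + 1 ∈ sh A) := by
  obtain ⟨a, ha, b, hb, hab⟩ := he
  cases a with
  | inl i =>
    cases b with
    | inl j =>
      rcases (sun_adj_ll.mp hab).2 with hj | hj
      · exact ⟨i, Or.inl ⟨ha, by rw [← hj]; exact hb⟩⟩
      · exact ⟨j, Or.inr ⟨hb, by rw [← hj]; exact ha⟩⟩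
    | inr m => exact adj_pair_lr hB hd hBi ha hb (sun_adj_lr.mp hab)
  | inr m =>
    cases b with
    | inl j =>
      obtain ⟨i', h'⟩ := adj_pair_lr hA hd.symm hAi hb ha (sun_adj_rl.mp hab)
      exact ⟨i', h'.symm⟩
    | inr m2 => exact absurd hab sun_adj_rr
end Proj

section Minors
open Sum

def IsMinor' {α β : Type*} (H : SimpleGraph α) (G : SimpleGraph β) : Prop :=
  ∃ f : α → Set β, (∀ a, (G.induce (f a)).Connected) ∧ Pairwise (Function.onFun Disjoint f) ∧
    ∀ ⦃a b : α⦄, H.Adj a b → ∃ u ∈ f a, ∃ v ∈ f b, G.Adj u v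

variable {n : ℕ} [hn3 : Fact (3 ≤ n)]

lemma sh_disj {A B : Set (ZMod n ⊕ ZMod n)} (h : Disjoint A B) : Disjoint (sh A) (sh B) := by
  rw [Set.disjoint_left]
  intro i hi hib
  exact Set.disjoint_left.mp h hi hib

theorem sun_no_K4 : ¬ IsMinor' (completeGraph (Fin 4)) (sun n) := by
  rintro ⟨f, hconn, hdisj, hadj⟩
  have fin4 : ∀ a : Fin 4, a ≠ a + 1 ∧ a ≠ a + 2 ∧ a ≠ a + 3 ∧ a + 1 ≠ a + 2 ∧
      a + 1 ≠ a + 3 ∧ a + 2 ≠ a + 3 := by decide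
  have hadj' : ∀ a b : Fin 4, a ≠ b → ∃ u ∈ f a, ∃ v ∈ f b, (sun n).Adj u v := by
    intro a b h
    exact hadj (by simpa [completeGraph] using h)
  have hinl : ∀ a : Fin 4, ∃ i, inl i ∈ f a := by
    intro a
    rcases shape (hconn a) with h | ⟨m, hm⟩
    · exact h
    · exfalso
      obtain ⟨d1, d2, d3, d4, d5, d6⟩ := fin4 a
      have get : ∀ b : Fin 4, a ≠ b → ∃ y ∈ f b, (sun n).Adj (inr m) y := by
        intro b hb
        obtain ⟨u, hu, v, hv, huv⟩ := hadj' a b hb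
        rw [hm] at hu
        rw [Set.mem_singleton_iff] at hu
        exact ⟨v, hv, hu ▸ huv⟩
      exact pigeon (hdisj d4) (hdisj d5) (hdisj d6) (get _ d1) (get _ d2) (get _ d3)
  set A : Fin 4 → Set (ZMod n) := fun a => sh (f a) with hA
  have key : ∀ t : Fin 4, t ≠ 0 →
      ∃ i, (i ∈ A 0 ∧ i + 1 ∈ A t) ∨ (i ∈ A t ∧ i + 1 ∈ A 0) := by
    intro t ht
    exact adj_pair (hconn 0) (hconn t) (hdisj (Ne.symm ht)) (hinl 0) (hinl t)
      (hadj' 0 t (Ne.symm ht))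
  obtain ⟨i1, h1⟩ := key 1 (by decide)
  obtain ⟨i2, h2⟩ := key 2 (by decide)
  obtain ⟨i3, h3⟩ := key 3 (by decide)
  have dis : ∀ t s : Fin 4, t ≠ s → Disjoint (A t) (A s) := fun t s h => sh_disj (hdisj h)
  have hbd : ∀ (t : Fin 4) (i : ZMod n), t ≠ 0 →
      ((i ∈ A 0 ∧ i + 1 ∈ A t) ∨ (i ∈ A t ∧ i + 1 ∈ A 0)) → Bd (A 0) i := by
    rintro t i ht (⟨hx, hy⟩ | ⟨hx, hy⟩)
    · exact Or.inl ⟨hx, fun hc => Set.disjoint_left.mp (dis 0 t (Ne.symm ht)) hc hy⟩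
    · exact Or.inr ⟨fun hc => Set.disjoint_left.mp (dis 0 t (Ne.symm ht)) hc hx, hy⟩
  have hne : ∀ (t s : Fin 4) (i j : ZMod n), t ≠ s → t ≠ 0 → s ≠ 0 →
      ((i ∈ A 0 ∧ i + 1 ∈ A t) ∨ (i ∈ A t ∧ i + 1 ∈ A 0)) →
      ((j ∈ A 0 ∧ j + 1 ∈ A s) ∨ (j ∈ A s ∧ j + 1 ∈ A 0)) → i ≠ j := by
    rintro t s i j hts ht hs (⟨hx, hy⟩ | ⟨hx, hy⟩) (⟨hx', hy'⟩ | ⟨hx', hy'⟩) rfl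
    · exact Set.disjoint_left.mp (dis t s hts) hy hy'
    · exact Set.disjoint_left.mp (dis 0 s (Ne.symm hs)) hx hx'
    · exact Set.disjoint_left.mp (dis t 0 ht) hx hx'
    · exact Set.disjoint_left.mp (dis t s hts) hx hx'
  obtain ⟨p, hp1⟩ := hinl 1
  have hp : p ∉ A 0 := fun hc => Set.disjoint_left.mp (dis 0 1 (by decide)) hc hp1
  exact no_three_bd (sh_connected (hconn 0) (hinl 0)) hp
    (hne 1 2 i1 i2 (by decide) (by decide) (by decide) h1 h2)
    (hne 1 3 i1 i3 (by decide) (by decide) (by decide) h1 h3)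
    (hne 2 3 i2 i3 (by decide) (by decide) (by decide) h2 h3)
    (hbd 1 i1 (by decide) h1) (hbd 2 i2 (by decide) h2) (hbd 3 i3 (by decide) h3)
end Minors

section Minors2
open Sum
variable {n : ℕ} [hn3 : Fact (3 ≤ n)]

theorem sun_no_K23 : ¬ IsMinor' (completeBipartiteGraph (Fin 2) (Fin 3)) (sun n) := by
  rintro ⟨f, hconn, hdisj, hadj⟩
  have hadj' : ∀ (s : Fin 2) (j : Fin 3),
      ∃ u ∈ f (.inl s), ∃ v ∈ f (.inr j), (sun n).Adj u v := by
    intro s j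
    exact hadj (by simp)
  have hinlA : ∀ s : Fin 2, ∃ i, inl i ∈ f (.inl s) := by
    intro s
    rcases shape (hconn (.inl s)) with h | ⟨m, hm⟩
    · exact h
    · exfalso
      have get : ∀ j : Fin 3, ∃ y ∈ f (.inr j), (sun n).Adj (inr m) y := by
        intro j
        obtain ⟨u, hu, v, hv, huv⟩ := hadj' s j
        rw [hm, Set.mem_singleton_iff] at hu
        exact ⟨v, hv, hu ▸ huv⟩
      exact pigeon (hdisj (show (Sum.inr 0 : Fin 2 ⊕ Fin 3) ≠ .inr 1 by decide))
        (hdisj (show (Sum.inr 0 : Fin 2 ⊕ Fin 3) ≠ .inr 2 by decide))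
        (hdisj (show (Sum.inr 1 : Fin 2 ⊕ Fin 3) ≠ .inr 2 by decide))
        (get 0) (get 1) (get 2)
  set A0 : Set (ZMod n) := sh (f (.inl 0)) with hA0
  set A1 : Set (ZMod n) := sh (f (.inl 1)) with hA1
  have dAB : ∀ (s : Fin 2) (j : Fin 3), Disjoint (f (.inl s)) (f (.inr j)) :=
    fun s j => hdisj (by simp)
  have d01 : Disjoint (f (.inl 0)) (f (.inl 1)) := hdisj (by decide)
  have conn : ∀ j : Fin 3, ∃ i : ZMod n,
      ((i ∈ A0 ∧ i + 1 ∈ sh (f (.inr j))) ∨ (i ∈ sh (f (.inr j)) ∧ i + 1 ∈ A0)) ∨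
      ((inr i ∈ f (.inr j)) ∧ ((i ∈ A0 ∧ i + 1 ∈ A1) ∨ (i ∈ A1 ∧ i + 1 ∈ A0))) := by
    intro j
    rcases shape (hconn (.inr j)) with h | ⟨m, hm⟩
    · obtain ⟨i, hi⟩ := adj_pair (hconn (.inl 0)) (hconn (.inr j)) (dAB 0 j)
        (hinlA 0) h (hadj' 0 j)
      exact ⟨i, Or.inl hi⟩
    · have getu : ∀ s : Fin 2, ∃ iu, inl iu ∈ f (.inl s) ∧ (iu = m ∨ iu = m + 1) := by
        intro s
        obtain ⟨u, hu, v, hv, huv⟩ := hadj' s j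
        rw [hm, Set.mem_singleton_iff] at hv
        subst hv
        cases u with
        | inl iu => exact ⟨iu, hu, sun_adj_lr.mp huv⟩
        | inr m2 => exact absurd huv sun_adj_rr
      obtain ⟨x0, hx0, hx0m⟩ := getu 0
      obtain ⟨x1, hx1, hx1m⟩ := getu 1
      have hxne : x0 ≠ x1 := by
        intro hc
        exact Set.disjoint_left.mp d01 hx0 (hc ▸ hx1)
      have hmm : inr m ∈ f (.inr j) := by rw [hm]; rfl
      rcases hx0m with e0 | e0 <;> rcases hx1m with e1 | e1
      · exact absurd (e0.trans e1.symm) hxne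
      · exact ⟨m, Or.inr ⟨hmm, Or.inl ⟨e0 ▸ hx0, e1 ▸ hx1⟩⟩⟩
      · exact ⟨m, Or.inr ⟨hmm, Or.inr ⟨e1 ▸ hx1, e0 ▸ hx0⟩⟩⟩
      · exact absurd (e0.trans e1.symm) hxne
  obtain ⟨i1, h1⟩ := conn 0
  obtain ⟨i2, h2⟩ := conn 1
  obtain ⟨i3, h3⟩ := conn 2
  have dshAB : ∀ j : Fin 3, Disjoint A0 (sh (f (.inr j))) := fun j => sh_disj (dAB 0 j)
  have dshA1B : ∀ j : Fin 3, Disjoint A1 (sh (f (.inr j))) := fun j => sh_disj (dAB 1 j)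
  have dsh01 : Disjoint A0 A1 := sh_disj d01
  have hbd : ∀ (j : Fin 3) (i : ZMod n),
      (((i ∈ A0 ∧ i + 1 ∈ sh (f (.inr j))) ∨ (i ∈ sh (f (.inr j)) ∧ i + 1 ∈ A0)) ∨
      ((inr i ∈ f (.inr j)) ∧ ((i ∈ A0 ∧ i + 1 ∈ A1) ∨ (i ∈ A1 ∧ i + 1 ∈ A0)))) →
      Bd A0 i := by
    rintro j i ((⟨hx, hy⟩ | ⟨hx, hy⟩) | ⟨-, (⟨hx, hy⟩ | ⟨hx, hy⟩)⟩)
    · exact Or.inl ⟨hx, fun hc => Set.disjoint_left.mp (dshAB j) hc hy⟩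
    · exact Or.inr ⟨fun hc => Set.disjoint_left.mp (dshAB j) hc hx, hy⟩
    · exact Or.inl ⟨hx, fun hc => Set.disjoint_left.mp dsh01 hc hy⟩
    · exact Or.inr ⟨fun hc => Set.disjoint_left.mp dsh01 hc hx, hy⟩
  have hne : ∀ (j k : Fin 3) (i : ZMod n), j ≠ k →
      (((i ∈ A0 ∧ i + 1 ∈ sh (f (.inr j))) ∨ (i ∈ sh (f (.inr j)) ∧ i + 1 ∈ A0)) ∨
      ((inr i ∈ f (.inr j)) ∧ ((i ∈ A0 ∧ i + 1 ∈ A1) ∨ (i ∈ A1 ∧ i + 1 ∈ A0)))) →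
      (((i ∈ A0 ∧ i + 1 ∈ sh (f (.inr k))) ∨ (i ∈ sh (f (.inr k)) ∧ i + 1 ∈ A0)) ∨
      ((inr i ∈ f (.inr k)) ∧ ((i ∈ A0 ∧ i + 1 ∈ A1) ∨ (i ∈ A1 ∧ i + 1 ∈ A0)))) → False := by
    intro j k i hjk hj hk
    have djk : Disjoint (f (.inr j)) (f (.inr k)) := hdisj (by simpa using hjk)
    have dshjk : Disjoint (sh (f (.inr j))) (sh (f (.inr k))) := sh_disj djk
    have n1 : ∀ x : ZMod n, x ∈ A0 → x ∈ A1 → False :=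
      fun x hx hy => Set.disjoint_left.mp dsh01 hx hy
    have n2 : ∀ x : ZMod n, x ∈ A0 → x ∈ sh (f (.inr j)) → False :=
      fun x hx hy => Set.disjoint_left.mp (dshAB j) hx hy
    have n3 : ∀ x : ZMod n, x ∈ A0 → x ∈ sh (f (.inr k)) → False :=
      fun x hx hy => Set.disjoint_left.mp (dshAB k) hx hy
    have n4 : ∀ x : ZMod n, x ∈ A1 → x ∈ sh (f (.inr j)) → False :=
      fun x hx hy => Set.disjoint_left.mp (dshA1B j) hx hy
    have n5 : ∀ x : ZMod n, x ∈ A1 → x ∈ sh (f (.inr k)) → False :=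
      fun x hx hy => Set.disjoint_left.mp (dshA1B k) hx hy
    have n6 : ∀ x : ZMod n, x ∈ sh (f (.inr j)) → x ∈ sh (f (.inr k)) → False :=
      fun x hx hy => Set.disjoint_left.mp dshjk hx hy
    have n7 : inr i ∈ f (.inr j) → inr i ∈ f (.inr k) → False :=
      fun hx hy => Set.disjoint_left.mp djk hx hy
    rcases hj with (⟨ax, ay⟩ | ⟨ax, ay⟩) | ⟨am, (⟨ax, ay⟩ | ⟨ax, ay⟩)⟩ <;>
      rcases hk with (⟨bx, by'⟩ | ⟨bx, by'⟩) | ⟨bm, (⟨bx, by'⟩ | ⟨bx, by'⟩)⟩ <;>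
      first
        | exact n7 am bm
        | exact n1 i ax bx
        | exact n1 i bx ax
        | exact n1 (i + 1) ay by'
        | exact n1 (i + 1) by' ay
        | exact n2 i ax bx
        | exact n2 i bx ax
        | exact n2 (i + 1) ay by'
        | exact n2 (i + 1) by' ay
        | exact n3 i ax bx
        | exact n3 i bx ax
        | exact n3 (i + 1) ay by'
        | exact n3 (i + 1) by' ay
        | exact n4 i ax bx
        | exact n4 i bx ax
        | exact n4 (i + 1) ay by'
        | exact n4 (i + 1) by' ay
        | exact n5 i ax bx
        | exact n5 i bx ax
        | exact n5 (i + 1) ay by'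
        | exact n5 (i + 1) by' ay
        | exact n6 i ax bx
        | exact n6 i bx ax
        | exact n6 (i + 1) ay by'
        | exact n6 (i + 1) by' ay
  obtain ⟨p, hp1⟩ := hinlA 1
  have hp : p ∉ A0 := fun hc => Set.disjoint_left.mp dsh01 hc hp1
  exact no_three_bd (sh_connected (hconn (.inl 0)) (hinlA 0)) hp
    (fun hc => hne 0 1 i1 (by decide) h1 (by rw [hc]; exact h2))
    (fun hc => hne 0 2 i1 (by decide) h1 (by rw [hc]; exact h3))
    (fun hc => hne 1 2 i2 (by decide) h2 (by rw [hc]; exact h3))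
    (hbd 0 i1 h1) (hbd 1 i2 h2) (hbd 2 i3 h3)
end Minors2

section Psi
open Sum

def IsPathVC' {V : Type*} (G : SimpleGraph V) (k : ℕ) (S : Set V) : Prop :=
  ∀ ⦃u v : V⦄ (w : G.Walk u v), w.IsPath → w.length + 1 = k → ∃ x ∈ w.support, x ∈ S

variable {n : ℕ} [hn3 : Fact (3 ≤ n)]

lemma zmod_one_ne_zero : (1 : ZMod n) ≠ 0 := by
  intro h10
  haveI : Fact (1 < n) := ⟨by have := hn3.out; omega⟩
  have := congrArg ZMod.val h10
  rw [ZMod.val_one, ZMod.val_zero] at this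
  omega

lemma p3_free {S : Set (ZMod n ⊕ ZMod n)} (hS : IsPathVC' (sun n) 3 S)
    {x y z : ZMod n ⊕ ZMod n} (hxy : x ≠ y) (hyz : y ≠ z) (hxz : x ≠ z)
    (axy : (sun n).Adj x y) (ayz : (sun n).Adj y z)
    (hx : x ∉ S) (hy : y ∉ S) (hz : z ∉ S) : False := by
  set w : (sun n).Walk x z := SimpleGraph.Walk.cons axy (SimpleGraph.Walk.cons ayz .nil)
  have hp : w.IsPath := by
    rw [SimpleGraph.Walk.isPath_def]
    simp [w, SimpleGraph.Walk.support_cons, List.nodup_cons, hxy, hyz, hxz]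
  obtain ⟨t, ht, hts⟩ := hS w hp (by simp [w])
  simp only [w, SimpleGraph.Walk.support_cons, SimpleGraph.Walk.support_nil,
    List.mem_cons, List.mem_singleton] at ht
  rcases ht with rfl | rfl | rfl | h
  · exact hx hts
  · exact hy hts
  · exact hz hts
  · exact absurd h List.not_mem_nil

lemma sum_le_card {f : ZMod n → ℕ} (h2 : ∀ i, f i ≤ 2) (h0 : ∀ i, f i = 2 → f (i - 1) = 0) :
    ∑ i, f i ≤ n := by
  classical
  set F2 := Finset.univ.filter (fun i : ZMod n => f i = 2) with hF2
  set F1 := Finset.univ.filter (fun i : ZMod n => f i = 1) with hF1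
  set F0 := Finset.univ.filter (fun i : ZMod n => f i = 0) with hF0
  have hcard : F2.card ≤ F0.card := by
    apply Finset.card_le_card_of_injOn (fun i => i - 1)
    · intro i hi
      rw [hF2, Finset.mem_coe, Finset.mem_filter] at hi
      rw [hF0, Finset.mem_coe, Finset.mem_filter]
      exact ⟨Finset.mem_univ _, h0 i hi.2⟩
    · intro a _ b _ h
      linear_combination h
  have hsplit : ∀ i, f i = (if f i = 1 then 1 else 0) + (if f i = 2 then 2 else 0) := by
    intro i
    have := h2 i
    split_ifs <;> omega
  calc ∑ i, f i = ∑ i, ((if f i = 1 then 1 else 0) + (if f i = 2 then 2 else 0)) :=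
        Finset.sum_congr rfl (fun i _ => hsplit i)
    _ = (∑ i, if f i = 1 then 1 else 0) + (∑ i, if f i = 2 then 2 else 0) :=
        Finset.sum_add_distrib
    _ = F1.card + 2 * F2.card := by
        congr 1
        · rw [hF1, ← Finset.sum_filter]
          simp
        · rw [hF2, ← Finset.sum_filter, Finset.sum_const, smul_eq_mul]
          ring
    _ ≤ F1.card + F2.card + F0.card := by omega
    _ ≤ Fintype.card (ZMod n) := by
        have d12 : Disjoint F1 F2 := by
          rw [Finset.disjoint_left]
          intro a ha hb
          rw [hF1, Finset.mem_filter] at ha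
          rw [hF2, Finset.mem_filter] at hb
          omega
        have d120 : Disjoint (F1 ∪ F2) F0 := by
          rw [Finset.disjoint_left]
          intro a ha hb
          rw [Finset.mem_union, hF1, hF2, Finset.mem_filter, Finset.mem_filter] at ha
          rw [hF0, Finset.mem_filter] at hb
          omega
        calc F1.card + F2.card + F0.card = (F1 ∪ F2).card + F0.card := by
              rw [Finset.card_union_of_disjoint d12]
          _ = ((F1 ∪ F2) ∪ F0).card := (Finset.card_union_of_disjoint d120).symm
          _ ≤ Finset.univ.card := Finset.card_le_univ _
          _ = Fintype.card (ZMod n) := rfl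
    _ = n := ZMod.card n
end Psi

section Psi2
open Sum
variable {n : ℕ} [hn3 : Fact (3 ≤ n)]

lemma sub_one_ne_self {i : ZMod n} : i - 1 ≠ i := by
  intro h
  apply zmod_one_ne_zero (n := n)
  linear_combination -h

lemma cover_ge {S : Set (ZMod n ⊕ ZMod n)} (hS : IsPathVC' (sun n) 3 S) : n ≤ S.ncard := by
  classical
  have hcompl : Sᶜ.ncard ≤ n := by
    set D : Finset (ZMod n ⊕ ZMod n) := Sᶜ.toFinset with hD
    have hDm : ∀ x, x ∈ D ↔ x ∉ S := by intro x; simp [hD]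
    set key : ZMod n ⊕ ZMod n → ZMod n := Sum.elim id id with hkey
    set f : ZMod n → ℕ := fun i => (D.filter (fun x => key x = i)).card with hf
    have hcard : D.card = ∑ i, f i :=
      Finset.card_eq_sum_card_fiberwise (fun x _ => Finset.mem_univ (key x))
    have hsub : ∀ i, D.filter (fun x => key x = i) ⊆ {inl i, inr i} := by
      intro i x hx
      rw [Finset.mem_filter] at hx
      cases x with
      | inl a =>
        have : a = i := hx.2
        simp [this]
      | inr a =>
        have : a = i := hx.2
        simp [this]
    have h2 : ∀ i, f i ≤ 2 := by
      intro i
      calc f i ≤ ({inl i, inr i} : Finset (ZMod n ⊕ ZMod n)).card :=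
            Finset.card_le_card (hsub i)
        _ ≤ 2 := Finset.card_insert_le _ _ |>.trans (by simp)
    have h0 : ∀ i, f i = 2 → f (i - 1) = 0 := by
      intro i hfi
      have hpair : ({inl i, inr i} : Finset (ZMod n ⊕ ZMod n)).card = 2 := by
        rw [Finset.card_pair (by simp)]
      have heq : D.filter (fun x => key x = i) = {inl i, inr i} :=
        Finset.eq_of_subset_of_card_le (hsub i) (by rw [hpair]; exact hfi.ge)
      have hvD : (inl i : ZMod n ⊕ ZMod n) ∉ S := by
        rw [← hDm]
        have : (inl i : ZMod n ⊕ ZMod n) ∈ D.filter (fun x => key x = i) := by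
          rw [heq]; simp
        exact (Finset.mem_filter.mp this).1
      have huD : (inr i : ZMod n ⊕ ZMod n) ∉ S := by
        rw [← hDm]
        have : (inr i : ZMod n ⊕ ZMod n) ∈ D.filter (fun x => key x = i) := by
          rw [heq]; simp
        exact (Finset.mem_filter.mp this).1
      rw [hf, Finset.card_eq_zero, Finset.eq_empty_iff_forall_notMem]
      intro x hx
      rw [Finset.mem_filter] at hx
      obtain ⟨hxD, hxk⟩ := hx
      cases x with
      | inl a =>
        have ha : a = i - 1 := hxk
        subst ha
        refine p3_free hS (y := inl i) (z := inr i) ?_ (by simp) (by simp) ?_ ?_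
          ((hDm _).mp hxD) hvD huD
        · exact fun h => sub_one_ne_self (Sum.inl.inj h)
        · exact sun_adj_ll.mpr ⟨fun h => sub_one_ne_self (Sum.inl.inj h), Or.inl (by ring)⟩
        · exact sun_adj_lr.mpr (Or.inl rfl)
      | inr a =>
        have ha : a = i - 1 := hxk
        subst ha
        refine p3_free hS (y := inl i) (z := inr i) (by simp) (by simp) ?_ ?_ ?_
          ((hDm _).mp hxD) hvD huD
        · exact fun h => sub_one_ne_self (Sum.inr.inj h)
        · exact sun_adj_rl.mpr (Or.inr (by ring))
        · exact sun_adj_lr.mpr (Or.inl rfl)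
    calc Sᶜ.ncard = D.card := Set.ncard_eq_toFinset_card' _
      _ = ∑ i, f i := hcard
      _ ≤ n := sum_le_card h2 h0
  have htot := Set.ncard_add_ncard_compl S
  have hcardW : Nat.card (ZMod n ⊕ ZMod n) = n + n := by
    rw [Nat.card_sum, Nat.card_eq_fintype_card, ZMod.card]
  omega

end Psi2

section TwoConn
open Sum
variable {n : ℕ} [hn3 : Fact (3 ≤ n)]

lemma natCast_ne_zero_zmod {s : ℕ} (h1 : 1 ≤ s) (h2 : s ≤ n - 1) : (s : ZMod n) ≠ 0 := by
  intro hc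
  rw [ZMod.natCast_eq_zero_iff] at hc
  have := Nat.le_of_dvd (by omega) hc
  have := hn3.out
  omega

lemma chain {x : ZMod n ⊕ ZMod n} {j : ZMod n}
    (hx : ∀ s : ℕ, 1 ≤ s → s ≤ n - 1 → inl (j + (s : ZMod n)) ≠ x) :
    ∀ s : ℕ, (h1 : 1 ≤ s) → (h2 : s ≤ n - 1) →
      ((sun n).induce {w | w ≠ x}).Reachable
        ⟨inl (j + 1), by simpa using hx 1 le_rfl (by have := hn3.out; omega)⟩
        ⟨inl (j + (s : ZMod n)), hx s h1 h2⟩ := by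
  intro s
  induction s with
  | zero => omega
  | succ t ih =>
    intro h1 h2
    rcases Nat.eq_or_lt_of_le h1 with he | hlt
    · have hc1 : ((t + 1 : ℕ) : ZMod n) = 1 := by rw [← he]; norm_num
      have hsub : (⟨inl (j + 1), by simpa using hx 1 le_rfl (by have := hn3.out; omega)⟩ :
          {w : ZMod n ⊕ ZMod n | w ≠ x}) = ⟨inl (j + ((t + 1 : ℕ) : ZMod n)), hx (t+1) h1 h2⟩ :=
        Subtype.ext (by
          show (inl (j + 1) : ZMod n ⊕ ZMod n) = inl (j + ((t + 1 : ℕ) : ZMod n))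
          rw [hc1])
      exact hsub ▸ SimpleGraph.Reachable.refl _
    · have ht1 : 1 ≤ t := by omega
      have ht2 : t ≤ n - 1 := by omega
      have step : ((sun n).induce {w | w ≠ x}).Adj
          ⟨inl (j + (t : ZMod n)), hx t ht1 ht2⟩
          ⟨inl (j + ((t + 1 : ℕ) : ZMod n)), hx (t+1) h1 h2⟩ := by
        show (sun n).Adj _ _
        apply sun_adj_ll.mpr
        constructor
        · intro hc
          have := Sum.inl.inj hc
          have h10 : ((1 : ℕ) : ZMod n) = 0 := by
            have : ((t:ZMod n)) = ((t+1 : ℕ) : ZMod n) := by linear_combination this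
            push_cast at this
            linear_combination -this
          simpa using zmod_one_ne_zero (n := n) (by exact_mod_cast h10)
        · left; push_cast; ring
      exact (ih ht1 ht2).trans step.reachable
end TwoConn

section TwoConn2
open Sum
variable {n : ℕ} [hn3 : Fact (3 ≤ n)]

theorem sun_del_connected (x : ZMod n ⊕ ZMod n) :
    ((sun n).induce {w | w ≠ x}).Connected := by
  classical
  have h3 := hn3.out
  set j : ZMod n := Sum.elim id id x with hj
  have hone : (1 : ZMod n) ≠ 0 := zmod_one_ne_zero
  have hbase : inl (j + 1) ≠ x := by
    cases x with
    | inl a =>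
      simp only [hj, Sum.elim_inl, id_eq]
      intro hc
      have := Sum.inl.inj hc
      apply hone; linear_combination this
    | inr a => simp
  have hx : ∀ s : ℕ, 1 ≤ s → s ≤ n - 1 → inl (j + (s : ZMod n)) ≠ x := by
    intro s h1 h2
    cases x with
    | inl a =>
      simp only [hj, Sum.elim_inl, id_eq]
      intro hc
      have := Sum.inl.inj hc
      exact natCast_ne_zero_zmod h1 h2 (by linear_combination this)
    | inr a => simp
  rw [SimpleGraph.connected_iff]
  refine ⟨?_, ⟨⟨inl (j + 1), hbase⟩⟩⟩
  have reachv : ∀ (k : ZMod n) (hk : inl k ≠ x),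
      ((sun n).induce {w | w ≠ x}).Reachable ⟨inl (j + 1), hbase⟩ ⟨inl k, hk⟩ := by
    intro k hk
    by_cases hkj : k = j
    · have step : ((sun n).induce {w | w ≠ x}).Adj ⟨inl (j + 1), hbase⟩ ⟨inl k, hk⟩ := by
        show (sun n).Adj _ _
        apply sun_adj_ll.mpr
        refine ⟨?_, Or.inr (by rw [hkj])⟩
        intro hc
        have := Sum.inl.inj hc
        apply hone
        rw [hkj] at this
        linear_combination this
      exact step.reachable
    · set s : ℕ := (k - j).val with hs
      have h1 : 1 ≤ s := by
        rcases Nat.eq_zero_or_pos s with h0 | h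
        · exfalso
          rw [hs] at h0
          rw [ZMod.val_eq_zero, sub_eq_zero] at h0
          exact hkj h0
        · exact h
      have h2 : s ≤ n - 1 := by
        have := ZMod.val_lt (k - j)
        omega
      have hjs : j + (s : ZMod n) = k := by
        rw [hs, ZMod.natCast_rightInverse (k - j)]
        ring
      have := chain hx s h1 h2
      have hsub : (⟨inl (j + (s : ZMod n)), hx s h1 h2⟩ : {w : ZMod n ⊕ ZMod n | w ≠ x}) =
          ⟨inl k, hk⟩ := Subtype.ext (by
            show (inl (j + (s : ZMod n)) : ZMod n ⊕ ZMod n) = inl k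
            rw [hjs])
      exact hsub ▸ this
  have reachall : ∀ y : {w : ZMod n ⊕ ZMod n | w ≠ x},
      ((sun n).induce {w | w ≠ x}).Reachable ⟨inl (j + 1), hbase⟩ y := by
    rintro ⟨y, hy⟩
    cases y with
    | inl k => exact reachv k hy
    | inr m =>
      by_cases hm : inl (α := ZMod n) (β := ZMod n) m = x
      · have hm1 : inl (m + 1) ≠ x := by
          rw [← hm]
          intro hc
          have := Sum.inl.inj hc
          apply hone; linear_combination this
        have step : ((sun n).induce {w | w ≠ x}).Adj ⟨inl (m + 1), hm1⟩ ⟨inr m, hy⟩ := by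
          show (sun n).Adj _ _
          exact sun_adj_lr.mpr (Or.inr rfl)
        exact (reachv (m + 1) hm1).trans step.reachable
      · have step : ((sun n).induce {w | w ≠ x}).Adj ⟨inl m, hm⟩ ⟨inr m, hy⟩ := by
          show (sun n).Adj _ _
          exact sun_adj_lr.mpr (Or.inl rfl)
        exact (reachv m hm).trans step.reachable
  intro u v
  exact (reachall u).symm.trans (reachall v)
end TwoConn2

section Transport

variable {V : Type*}


variable {α β : Type*} {G : SimpleGraph α} {G' : SimpleGraph β}

lemma connected_induce_image (φ : G ≃g G') {s : Set α} (h : (G.induce s).Connected) :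
    (G'.induce (⇑φ '' s)).Connected := by
  refine SimpleGraph.Connected.map
    ⟨fun a => ⟨φ a.1, ⟨a.1, a.2, rfl⟩⟩, fun {a b} hab => φ.map_rel_iff.mpr hab⟩ ?_ h
  rintro ⟨y, x, hx, rfl⟩
  exact ⟨⟨x, hx⟩, rfl⟩

lemma isMinor_image {γ : Type*} {K : SimpleGraph γ} (φ : G ≃g G') (h : IsMinor K G) :
    IsMinor K G' := by
  obtain ⟨f, hconn, hdisj, hadj⟩ := h
  refine ⟨fun a => ⇑φ '' f a, fun a => connected_induce_image φ (hconn a), ?_, ?_⟩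
  · intro a b hab
    have := hdisj hab
    simp only [Function.onFun] at this ⊢
    exact (Set.disjoint_image_iff φ.injective).mpr this
  · intro a b hab
    obtain ⟨u, hu, v, hv, huv⟩ := hadj hab
    exact ⟨φ u, ⟨u, hu, rfl⟩, φ v, ⟨v, hv, rfl⟩, φ.map_rel_iff.mpr huv⟩

lemma isPathVC_image (φ : G ≃g G') {S : Set α} {k : ℕ} (h : IsPathVC G k S) :
    IsPathVC G' k (⇑φ '' S) := by
  intro u v w hp hl
  have hp' : (w.map φ.symm.toHom).IsPath :=
    SimpleGraph.Walk.map_isPath_of_injective φ.symm.injective hp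
  have hl' : (w.map φ.symm.toHom).length + 1 = k := by
    rw [SimpleGraph.Walk.length_map]; exact hl
  obtain ⟨x, hx, hxS⟩ := h (w.map φ.symm.toHom) hp' hl'
  rw [SimpleGraph.Walk.support_map] at hx
  obtain ⟨z, hz, hzx⟩ := List.mem_map.mp hx
  refine ⟨z, hz, ⟨x, hxS, ?_⟩⟩
  rw [← hzx]
  exact φ.apply_symm_apply z

end Transport

section Final

def zmodFinEquiv (n : ℕ) [NeZero n] : ZMod n ≃ Fin n where
  toFun x := ⟨x.val, ZMod.val_lt x⟩
  invFun i := (i.1 : ZMod n)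
  left_inv x := ZMod.natCast_rightInverse x
  right_inv i := Fin.ext (ZMod.val_cast_of_lt i.isLt)

theorem outerplanar_bound_tight (n : ℕ) (hn : 3 ≤ n) :
    ∃ H : SimpleGraph (Fin (2 * n)), IsTwoConnected H ∧ IsOuterplanar H ∧ n ≤ psi H 3 := by
  haveI : Fact (3 ≤ n) := ⟨hn⟩
  haveI : NeZero n := ⟨by omega⟩
  let e : (ZMod n ⊕ ZMod n) ≃ Fin (2 * n) :=
    ((zmodFinEquiv n).sumCongr (zmodFinEquiv n)).trans (finSumFinEquiv.trans (finCongr (by ring)))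
  let H := (sun n).comap e.symm.toEmbedding
  let φ : H ≃g (sun n) := SimpleGraph.Iso.comap e.symm (sun n)
  refine ⟨H, ⟨?_, ?_⟩, ⟨?_, ?_⟩, ?_⟩
  · rw [Fintype.card_fin]; omega
  · intro v
    have hset : {w : Fin (2 * n) | w ≠ v} = ⇑φ.symm '' {w | w ≠ φ v} := by
      ext y
      constructor
      · intro hy
        refine ⟨φ y, ?_, φ.symm_apply_apply y⟩
        intro hc
        exact hy (φ.injective hc)
      · rintro ⟨z, hz, rfl⟩
        intro hc
        apply hz
        have : z = φ v := by rw [← hc, RelIso.apply_symm_apply]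
        exact this
    rw [hset]
    exact connected_induce_image φ.symm (sun_del_connected (φ v))
  · exact fun h => sun_no_K4 (isMinor_image φ h)
  · exact fun h => sun_no_K23 (isMinor_image φ h)
  · apply le_csInf
    · exact ⟨(Set.univ : Set (Fin (2 * n))).ncard, Set.univ,
        fun u v w _ _ => ⟨u, w.start_mem_support, trivial⟩, rfl⟩
    · rintro m ⟨S, hc, rfl⟩
      have := cover_ge (n := n) (S := ⇑φ '' S) (isPathVC_image φ hc)
      rwa [Set.ncard_image_of_injective S φ.injective] at this
end Final
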